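/- Let n ≥ 1 and let S and T be standard Young tableaux of shape (n,n) such that for every k with 1 ≤ k ≤ n, the k-th entry of the first row of S is greater than or equal to the k-th entry of the first row of T. Let m be the column matching of T, and let w be any noncrossing perfect matching of {1,…,2n} whose set of arc-minima equals the set of first-row entries of S. Then w is reachable from m by a finite (possibly empty) sequence of resolution steps. -/
import Mathlib


/-- A standard Young tableau of shape `(n,n)`: a filling of a `2 × n` array with the
integers `1, …, 2n`, each used exactly once, strictly increasing along rows and columns. -/
structure SYT (n : ℕ) where
  entry : Fin 2 → Fin n → ℕ
  mem_range : ∀ i j, entry i j ∈ Finset.Icc 1 (2 * n)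
  inj : Function.Injective (fun p : Fin 2 × Fin n => entry p.1 p.2)
  surj : ∀ k ∈ Finset.Icc 1 (2 * n), ∃ i j, entry i j = k
  row_mono : ∀ i : Fin 2, StrictMono (entry i)
  col_lt : ∀ j : Fin n, entry 0 j < entry 1 j

/-- A perfect matching of `{1, …, 2n}`, with each arc recorded as an ordered pair
`(min, max)`. -/
structure Matching (n : ℕ) where
  arcs : Finset (ℕ × ℕ)
  arc_lt : ∀ p ∈ arcs, p.1 < p.2
  arc_mem : ∀ p ∈ arcs, p.1 ∈ Finset.Icc 1 (2 * n) ∧ p.2 ∈ Finset.Icc 1 (2 * n)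
  cover : ∀ k ∈ Finset.Icc 1 (2 * n), ∃! p : ℕ × ℕ, p ∈ arcs ∧ (k = p.1 ∨ k = p.2)

/-- Arcs `{a,c}` and `{b,d}` (each written `(min, max)`) cross when `a < b < c < d`. -/
def Crosses (p q : ℕ × ℕ) : Prop := p.1 < q.1 ∧ q.1 < p.2 ∧ p.2 < q.2

/-- A matching is noncrossing when no two of its arcs cross. -/
def Noncrossing {n : ℕ} (m : Matching n) : Prop :=
  ∀ p ∈ m.arcs, ∀ q ∈ m.arcs, ¬ Crosses p q

/-- The set of arc-minima (smaller endpoints of the arcs) of a matching. -/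
def arcMinima {n : ℕ} (m : Matching n) : Finset ℕ := m.arcs.image Prod.fst

/-- The set of entries of the first row of a tableau. -/
def firstRow {n : ℕ} (T : SYT n) : Finset ℕ := Finset.univ.image (T.entry 0)

/-- The arcs of the column matching of a tableau: the two entries of each column. -/
def columnArcs {n : ℕ} (T : SYT n) : Finset (ℕ × ℕ) :=
  Finset.univ.image (fun j : Fin n => (T.entry 0 j, T.entry 1 j))

/-- `ResPair m m₁ m₂` : `m` has a crossing pair of arcs `{a,c}, {b,d}` (`a<b<c<d`),
`m₁` is obtained by replacing them with `{a,b}, {c,d}`, and `m₂` by replacing them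
with `{a,d}, {b,c}`. -/
def ResPair {n : ℕ} (m m₁ m₂ : Matching n) : Prop :=
  ∃ a b c d : ℕ, a < b ∧ b < c ∧ c < d ∧ (a, c) ∈ m.arcs ∧ (b, d) ∈ m.arcs ∧
    m₁.arcs = (m.arcs \ {(a, c), (b, d)}) ∪ {(a, b), (c, d)} ∧
    m₂.arcs = (m.arcs \ {(a, c), (b, d)}) ∪ {(a, d), (b, c)}

/-- A single resolution step. -/
def ResStep {n : ℕ} (m m' : Matching n) : Prop :=
  ∃ m₁ m₂ : Matching n, ResPair m m₁ m₂ ∧ (m' = m₁ ∨ m' = m₂)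

/-- `w` is reachable from `m` by a finite (possibly empty) sequence of resolution steps. -/
def Reachable {n : ℕ} (m w : Matching n) : Prop := Relation.ReflTransGen ResStep m w

/-- Directed edge of the tableau graph: `T` is obtained from `S` by swapping `i` and
`i+1`, where `i` is in the bottom row of `S` and `i+1` is in the top row of `S`. -/
def Edge {n : ℕ} (S T : SYT n) : Prop :=
  ∃ i : ℕ, (∃ j : Fin n, S.entry 1 j = i) ∧ (∃ j : Fin n, S.entry 0 j = i + 1) ∧
    ∀ p q, T.entry p q =
      if S.entry p q = i then i + 1 else if S.entry p q = i + 1 then i else S.entry p q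

/-- The tableau-graph partial order: existence of a directed path. -/
def TabLE {n : ℕ} (S T : SYT n) : Prop := Relation.ReflTransGen Edge S T

section Helpers

open Finset

variable {n : ℕ}

lemma Matching.ext' {m m' : Matching n} (h : m.arcs = m'.arcs) : m = m' := by
  cases m; cases m'; simp_all

lemma Matching.mem_unique (m : Matching n) {p q : ℕ × ℕ} (hp : p ∈ m.arcs) (hq : q ∈ m.arcs)
    {k : ℕ} (hk1 : k = p.1 ∨ k = p.2) (hk2 : k = q.1 ∨ k = q.2) : p = q := by
  have hkI : k ∈ Finset.Icc 1 (2 * n) := by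
    rcases hk1 with h | h <;> rw [h]
    · exact (m.arc_mem p hp).1
    · exact (m.arc_mem p hp).2
  obtain ⟨r, _, hu⟩ := m.cover k hkI
  rw [hu p ⟨hp, hk1⟩, hu q ⟨hq, hk2⟩]

lemma Matching.fst_inj (m : Matching n) {p q : ℕ × ℕ} (hp : p ∈ m.arcs) (hq : q ∈ m.arcs)
    (h : p.1 = q.1) : p = q :=
  m.mem_unique hp hq (k := p.1) (Or.inl rfl) (Or.inl h)

lemma Matching.snd_inj (m : Matching n) {p q : ℕ × ℕ} (hp : p ∈ m.arcs) (hq : q ∈ m.arcs)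
    (h : p.2 = q.2) : p = q :=
  m.mem_unique hp hq (k := p.2) (Or.inr rfl) (Or.inr h)

lemma Matching.fst_ne_snd (m : Matching n) {p q : ℕ × ℕ} (hp : p ∈ m.arcs) (hq : q ∈ m.arcs)
    (h : p.1 = q.2) : False := by
  have := m.mem_unique hp hq (k := p.1) (Or.inl rfl) (Or.inr h)
  subst this
  exact absurd (h ▸ m.arc_lt p hp) (lt_irrefl _)

/-- The set of arc maxima. -/
def arcMaxima {n : ℕ} (m : Matching n) : Finset ℕ := m.arcs.image Prod.snd

lemma mem_minima_iff {m : Matching n} {x : ℕ} :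
    x ∈ arcMinima m ↔ ∃ p ∈ m.arcs, p.1 = x := by
  simp [arcMinima]

lemma mem_maxima_iff {m : Matching n} {x : ℕ} :
    x ∈ arcMaxima m ↔ ∃ p ∈ m.arcs, p.2 = x := by
  simp [arcMaxima]

lemma minima_or_maxima (m : Matching n) {x : ℕ} (hx : x ∈ Finset.Icc 1 (2 * n)) :
    x ∈ arcMinima m ∨ x ∈ arcMaxima m := by
  obtain ⟨p, ⟨hp, hk⟩, _⟩ := m.cover x hx
  rcases hk with h | h
  · exact Or.inl (mem_minima_iff.2 ⟨p, hp, h.symm⟩)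
  · exact Or.inr (mem_maxima_iff.2 ⟨p, hp, h.symm⟩)

lemma not_minima_and_maxima (m : Matching n) {x : ℕ}
    (h1 : x ∈ arcMinima m) (h2 : x ∈ arcMaxima m) : False := by
  obtain ⟨p, hp, hpx⟩ := mem_minima_iff.1 h1
  obtain ⟨q, hq, hqx⟩ := mem_maxima_iff.1 h2
  exact m.fst_ne_snd hp hq (hpx.trans hqx.symm)

lemma minima_subset (m : Matching n) : arcMinima m ⊆ Finset.Icc 1 (2 * n) := by
  intro x hx
  obtain ⟨p, hp, hpx⟩ := mem_minima_iff.1 hx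
  exact hpx ▸ (m.arc_mem p hp).1

lemma maxima_subset (m : Matching n) : arcMaxima m ⊆ Finset.Icc 1 (2 * n) := by
  intro x hx
  obtain ⟨p, hp, hpx⟩ := mem_maxima_iff.1 hx
  exact hpx ▸ (m.arc_mem p hp).2

end Helpers
section Res

variable {n : ℕ}

lemma share_abcd (m : Matching n) {a b c d : ℕ}
    (hac : (a,c) ∈ m.arcs) (hbd : (b,d) ∈ m.arcs)
    {q : ℕ × ℕ} (hq : q ∈ m.arcs) {k : ℕ} (hk : k = q.1 ∨ k = q.2)
    (habcd : k = a ∨ k = b ∨ k = c ∨ k = d) : q = (a,c) ∨ q = (b,d) := by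
  rcases habcd with h | h | h | h
  · exact Or.inl (m.mem_unique hq hac hk (Or.inl h))
  · exact Or.inr (m.mem_unique hq hbd hk (Or.inl h))
  · exact Or.inl (m.mem_unique hq hac hk (Or.inr h))
  · exact Or.inr (m.mem_unique hq hbd hk (Or.inr h))

lemma exists_res (m : Matching n) {a b c d : ℕ} (hab : a < b) (hbc : b < c) (hcd : c < d)
    (hac : (a,c) ∈ m.arcs) (hbd : (b,d) ∈ m.arcs) (u v : ℕ × ℕ)
    (hu : u.1 < u.2) (hv : v.1 < v.2)
    (hiff : ∀ k : ℕ, (k = a ∨ k = b ∨ k = c ∨ k = d) ↔ (k = u.1 ∨ k = u.2 ∨ k = v.1 ∨ k = v.2))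
    (hd1 : u.1 ≠ v.1) (hd2 : u.1 ≠ v.2) (hd3 : u.2 ≠ v.1) (hd4 : u.2 ≠ v.2) :
    ∃ m' : Matching n, m'.arcs = (m.arcs \ {(a,c),(b,d)}) ∪ {u, v} := by
  set A : Finset (ℕ × ℕ) := (m.arcs \ {(a,c),(b,d)}) ∪ {u, v} with hA
  have hmemA : ∀ q : ℕ × ℕ, q ∈ A ↔ ((q ∈ m.arcs ∧ q ≠ (a,c) ∧ q ≠ (b,d)) ∨ q = u ∨ q = v) := by
    intro q
    simp only [hA, Finset.mem_union, Finset.mem_sdiff, Finset.mem_insert, Finset.mem_singleton]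
    tauto
  have habcdI : a ∈ Finset.Icc 1 (2*n) ∧ b ∈ Finset.Icc 1 (2*n) ∧
      c ∈ Finset.Icc 1 (2*n) ∧ d ∈ Finset.Icc 1 (2*n) :=
    ⟨(m.arc_mem _ hac).1, (m.arc_mem _ hbd).1, (m.arc_mem _ hac).2, (m.arc_mem _ hbd).2⟩
  have hmemIcc : ∀ k : ℕ, (k = a ∨ k = b ∨ k = c ∨ k = d) → k ∈ Finset.Icc 1 (2*n) := by
    rintro k (rfl | rfl | rfl | rfl) <;> tauto
  refine ⟨⟨A, ?_, ?_, ?_⟩, rfl⟩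
  · intro p hp
    rcases (hmemA p).1 hp with ⟨hp, _, _⟩ | rfl | rfl
    · exact m.arc_lt p hp
    · exact hu
    · exact hv
  · intro p hp
    rcases (hmemA p).1 hp with ⟨hp, _, _⟩ | rfl | rfl
    · exact m.arc_mem p hp
    · exact ⟨hmemIcc _ ((hiff _).2 (Or.inl rfl)), hmemIcc _ ((hiff _).2 (Or.inr (Or.inl rfl)))⟩
    · exact ⟨hmemIcc _ ((hiff _).2 (Or.inr (Or.inr (Or.inl rfl)))),
        hmemIcc _ ((hiff _).2 (Or.inr (Or.inr (Or.inr rfl))))⟩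
  · intro k hk
    by_cases hk4 : k = a ∨ k = b ∨ k = c ∨ k = d
    · -- k is an endpoint of u or v
      have huveq : ∀ q1 q2 : ℕ × ℕ, (q1 = u ∨ q1 = v) → (q2 = u ∨ q2 = v) →
          (k = q1.1 ∨ k = q1.2) → (k = q2.1 ∨ k = q2.2) → q1 = q2 := by
        rintro q1 q2 (rfl | rfl) (rfl | rfl) h1 h2 <;> first
          | rfl
          | (exfalso; rcases h1 with h1 | h1 <;> rcases h2 with h2 | h2 <;> omega)
      have hnotold : ∀ q ∈ m.arcs, q ≠ (a,c) → q ≠ (b,d) → ¬(k = q.1 ∨ k = q.2) := by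
        intro q hq hq1 hq2 hkq
        rcases share_abcd m hac hbd hq hkq hk4 with h | h
        · exact hq1 h
        · exact hq2 h
      rcases (hiff k).1 hk4 with h | h | h | h
      · refine ⟨u, ⟨(hmemA u).2 (Or.inr (Or.inl rfl)), Or.inl h⟩, ?_⟩
        rintro q ⟨hqA, hkq⟩
        rcases (hmemA q).1 hqA with ⟨hq, h1, h2⟩ | rfl | rfl
        · exact absurd hkq (hnotold q hq h1 h2)
        · rfl
        · exact huveq _ _ (Or.inr rfl) (Or.inl rfl) hkq (Or.inl h)
      · refine ⟨u, ⟨(hmemA u).2 (Or.inr (Or.inl rfl)), Or.inr h⟩, ?_⟩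
        rintro q ⟨hqA, hkq⟩
        rcases (hmemA q).1 hqA with ⟨hq, h1, h2⟩ | rfl | rfl
        · exact absurd hkq (hnotold q hq h1 h2)
        · rfl
        · exact huveq _ _ (Or.inr rfl) (Or.inl rfl) hkq (Or.inr h)
      · refine ⟨v, ⟨(hmemA v).2 (Or.inr (Or.inr rfl)), Or.inl h⟩, ?_⟩
        rintro q ⟨hqA, hkq⟩
        rcases (hmemA q).1 hqA with ⟨hq, h1, h2⟩ | rfl | rfl
        · exact absurd hkq (hnotold q hq h1 h2)
        · exact huveq _ _ (Or.inl rfl) (Or.inr rfl) hkq (Or.inl h)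
        · rfl
      · refine ⟨v, ⟨(hmemA v).2 (Or.inr (Or.inr rfl)), Or.inr h⟩, ?_⟩
        rintro q ⟨hqA, hkq⟩
        rcases (hmemA q).1 hqA with ⟨hq, h1, h2⟩ | rfl | rfl
        · exact absurd hkq (hnotold q hq h1 h2)
        · exact huveq _ _ (Or.inl rfl) (Or.inr rfl) hkq (Or.inr h)
        · rfl
    · -- k is not among a,b,c,d
      obtain ⟨r, ⟨hr, hkr⟩, hru⟩ := m.cover k hk
      have hrac : r ≠ (a,c) := by
        rintro rfl
        rcases hkr with h | h
        · exact hk4 (Or.inl h)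
        · exact hk4 (Or.inr (Or.inr (Or.inl h)))
      have hrbd : r ≠ (b,d) := by
        rintro rfl
        rcases hkr with h | h
        · exact hk4 (Or.inr (Or.inl h))
        · exact hk4 (Or.inr (Or.inr (Or.inr h)))
      refine ⟨r, ⟨(hmemA r).2 (Or.inl ⟨hr, hrac, hrbd⟩), hkr⟩, ?_⟩
      rintro q ⟨hqA, hkq⟩
      rcases (hmemA q).1 hqA with ⟨hq, _, _⟩ | rfl | rfl
      · exact hru q ⟨hq, hkq⟩
      · exact absurd ((hiff k).2 (by tauto)) hk4
      · exact absurd ((hiff k).2 (by tauto)) hk4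

/-- Given a crossing pair in `m`, both resolutions exist and are reachable in one step. -/
lemma resSteps (m : Matching n) {a b c d : ℕ} (hab : a < b) (hbc : b < c) (hcd : c < d)
    (hac : (a,c) ∈ m.arcs) (hbd : (b,d) ∈ m.arcs) :
    ∃ m₁ m₂ : Matching n,
      m₁.arcs = (m.arcs \ {(a,c),(b,d)}) ∪ {(a,b), (c,d)} ∧
      m₂.arcs = (m.arcs \ {(a,c),(b,d)}) ∪ {(a,d), (b,c)} ∧
      ResStep m m₁ ∧ ResStep m m₂ := by
  obtain ⟨m₁, h₁⟩ := exists_res m hab hbc hcd hac hbd (a,b) (c,d) hab hcd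
    (by intro k; dsimp; omega) (by dsimp; omega) (by dsimp; omega) (by dsimp; omega)
    (by dsimp; omega)
  obtain ⟨m₂, h₂⟩ := exists_res m hab hbc hcd hac hbd (a,d) (b,c)
    (by dsimp; omega) (by dsimp; omega)
    (by intro k; dsimp; omega) (by dsimp; omega) (by dsimp; omega) (by dsimp; omega)
    (by dsimp; omega)
  exact ⟨m₁, m₂, h₁, h₂, ⟨m₁, m₂, ⟨a,b,c,d, hab, hbc, hcd, hac, hbd, h₁, h₂⟩, Or.inl rfl⟩,
    ⟨m₁, m₂, ⟨a,b,c,d, hab, hbc, hcd, hac, hbd, h₁, h₂⟩, Or.inr rfl⟩⟩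

end Res
section Cnt

open Finset

/-- Number of elements of `O` that are `≤ v`. -/
def CntLe (O : Finset ℕ) (v : ℕ) : ℕ := (O.filter (· ≤ v)).card

lemma cntLe_mono (O : Finset ℕ) {v w : ℕ} (h : v ≤ w) : CntLe O v ≤ CntLe O w := by
  apply Finset.card_le_card
  intro x hx
  simp only [Finset.mem_filter] at *
  exact ⟨hx.1, hx.2.trans h⟩

lemma cntLe_full {N : ℕ} (O : Finset ℕ) (hO : O ⊆ Finset.Icc 1 N) {v : ℕ} (h : N ≤ v) :
    CntLe O v = O.card := by
  unfold CntLe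
  congr 1
  apply Finset.filter_true_of_mem
  intro x hx
  exact le_trans (Finset.mem_Icc.1 (hO hx)).2 h

lemma cntLe_succ (O : Finset ℕ) (v : ℕ) :
    CntLe O (v + 1) = CntLe O v + (if v + 1 ∈ O then 1 else 0) := by
  unfold CntLe
  by_cases hv : v + 1 ∈ O
  · rw [if_pos hv]
    have : O.filter (· ≤ v + 1) = insert (v+1) (O.filter (· ≤ v)) := by
      ext x
      simp only [Finset.mem_filter, Finset.mem_insert]
      constructor
      · rintro ⟨hx, hxv⟩
        rcases Nat.lt_or_ge x (v+1) with h | h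
        · exact Or.inr ⟨hx, by omega⟩
        · exact Or.inl (by omega)
      · rintro (rfl | ⟨hx, hxv⟩)
        · exact ⟨hv, le_refl _⟩
        · exact ⟨hx, by omega⟩
    rw [this, Finset.card_insert_of_notMem (by simp)]
  · rw [if_neg hv]
    have : O.filter (· ≤ v + 1) = O.filter (· ≤ v) := by
      ext x
      simp only [Finset.mem_filter]
      constructor
      · rintro ⟨hx, hxv⟩
        refine ⟨hx, ?_⟩
        rcases Nat.lt_or_ge x (v+1) with h | h
        · omega
        · exfalso; have : x = v+1 := by omega
          exact hv (this ▸ hx)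
      · rintro ⟨hx, hxv⟩; exact ⟨hx, by omega⟩
    rw [this]
    omega

lemma exists_strict {O O' : Finset ℕ} (hdom : ∀ v, CntLe O' v ≤ CntLe O v) (hne : O ≠ O') :
    ∃ v, CntLe O' v < CntLe O v := by
  have hD : ((O \ O') ∪ (O' \ O)).Nonempty := by
    rw [Finset.nonempty_iff_ne_empty]
    intro h
    apply hne
    have h1 : O \ O' = ∅ := by
      rw [← Finset.subset_empty, ← h]; exact Finset.subset_union_left
    have h2 : O' \ O = ∅ := by
      rw [← Finset.subset_empty, ← h]; exact Finset.subset_union_right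
    rw [Finset.sdiff_eq_empty_iff_subset] at h1 h2
    exact Finset.Subset.antisymm h1 h2
  set x := ((O \ O') ∪ (O' \ O)).min' hD with hx
  have hxmem := ((O \ O') ∪ (O' \ O)).min'_mem hD
  have hagree : ∀ y, y < x → (y ∈ O ↔ y ∈ O') := by
    intro y hy
    by_contra hiff
    have : y ∈ (O \ O') ∪ (O' \ O) := by
      simp only [Finset.mem_union, Finset.mem_sdiff]
      tauto
    exact absurd (Finset.min'_le _ _ this) (by omega)
  rw [← hx] at hxmem
  simp only [Finset.mem_union, Finset.mem_sdiff] at hxmem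
  have key : ∀ (P Q : Finset ℕ), x ∈ P → x ∉ Q → (∀ y, y < x → (y ∈ P ↔ y ∈ Q)) →
      CntLe Q x < CntLe P x := by
    intro P Q hP hQ hag
    apply Finset.card_lt_card
    constructor
    · intro y hy
      simp only [Finset.mem_filter] at *
      rcases Nat.lt_or_ge y x with h | h
      · exact ⟨(hag y h).2 hy.1, hy.2⟩
      · have : y = x := by omega
        exact absurd (this ▸ hy.1) hQ
    · intro hsub
      have := hsub (Finset.mem_filter.2 ⟨hP, le_refl x⟩)
      simp only [Finset.mem_filter] at this
      exact hQ this.1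
  rcases hxmem with ⟨h1, h2⟩ | ⟨h1, h2⟩
  · exact ⟨x, key O O' h1 h2 (fun y hy => hagree y hy)⟩
  · exact absurd (hdom x) (Nat.not_le.2 (key O' O h1 h2 (fun y hy => (hagree y hy).symm)))

lemma select {n : ℕ} {O O' : Finset ℕ} (hO : O ⊆ Finset.Icc 1 (2*n))
    (hO' : O' ⊆ Finset.Icc 1 (2*n)) (hcard : O.card = O'.card)
    (hdom : ∀ v, CntLe O' v ≤ CntLe O v) (hne : O ≠ O') :
    ∃ i, i ∈ O ∧ i + 1 ∉ O ∧ CntLe O' i < CntLe O i := by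
  obtain ⟨v₀, hv₀⟩ := exists_strict hdom hne
  have hv₀lt : v₀ < 2 * n := by
    by_contra h
    rw [cntLe_full O hO (by omega), cntLe_full O' hO' (by omega), hcard] at hv₀
    omega
  set Sstr := (Finset.range (2*n)).filter (fun v => CntLe O' v < CntLe O v) with hSstr
  have hSne : Sstr.Nonempty := ⟨v₀, by simp [hSstr, Finset.mem_filter, hv₀lt, hv₀]⟩
  set i₁ := Sstr.max' hSne with hi₁
  have hi₁mem := Sstr.max'_mem hSne
  simp only [hSstr, Finset.mem_filter, Finset.mem_range] at hi₁mem
  rw [← hi₁] at hi₁mem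
  obtain ⟨hi₁lt, hi₁str⟩ := hi₁mem
  -- at i₁ + 1, no strictness
  have heq1 : CntLe O' (i₁+1) = CntLe O (i₁+1) := by
    rcases Nat.lt_or_ge (i₁+1) (2*n) with h | h
    · by_contra hne1
      have hstrict : CntLe O' (i₁+1) < CntLe O (i₁+1) :=
        lt_of_le_of_ne (hdom _) hne1
      have : i₁ + 1 ∈ Sstr := by simp [hSstr, Finset.mem_filter, h, hstrict]
      have := Finset.le_max' _ _ this
      omega
    · rw [cntLe_full O hO h, cntLe_full O' hO' h, hcard]
  have hsuccO := cntLe_succ O i₁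
  have hsuccO' := cntLe_succ O' i₁
  have hi₁1O : i₁ + 1 ∉ O := by
    intro hmem
    rw [if_pos hmem] at hsuccO
    by_cases h' : i₁ + 1 ∈ O' <;> [rw [if_pos h'] at hsuccO'; rw [if_neg h'] at hsuccO'] <;>
      omega
  by_cases hi₁O : i₁ ∈ O
  · exact ⟨i₁, hi₁O, hi₁1O, hi₁str⟩
  · -- take the largest element of O below i₁
    have hfne : (O.filter (· ≤ i₁)).Nonempty := by
      rw [← Finset.card_pos]
      have : 0 < CntLe O i₁ := by omega
      exact this
    set j := (O.filter (· ≤ i₁)).max' hfne with hj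
    have hjmem := (O.filter (· ≤ i₁)).max'_mem hfne
    simp only [Finset.mem_filter] at hjmem
    rw [← hj] at hjmem
    obtain ⟨hjO, hjle⟩ := hjmem
    have hjne : j ≠ i₁ := fun h => hi₁O (h ▸ hjO)
    have hjlt : j < i₁ := lt_of_le_of_ne hjle hjne
    have hj1 : j + 1 ∉ O := by
      intro hmem
      have : j + 1 ∈ O.filter (· ≤ i₁) := Finset.mem_filter.2 ⟨hmem, by omega⟩
      have := Finset.le_max' _ _ this
      omega
    have hcnteq : CntLe O j = CntLe O i₁ := by
      unfold CntLe
      congr 1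
      ext y
      simp only [Finset.mem_filter]
      constructor
      · rintro ⟨hy, hyv⟩; exact ⟨hy, by omega⟩
      · rintro ⟨hy, hyv⟩
        exact ⟨hy, Finset.le_max' (O.filter (· ≤ i₁)) y (Finset.mem_filter.2 ⟨hy, hyv⟩)⟩
    refine ⟨j, hjO, hj1, ?_⟩
    calc CntLe O' j ≤ CntLe O' i₁ := cntLe_mono O' (le_of_lt hjlt)
    _ < CntLe O i₁ := hi₁str
    _ = CntLe O j := hcnteq.symm

end Cnt
section MatchCount

open Finset

variable {n : ℕ}

lemma minima_card_eq (m : Matching n) : (arcMinima m).card = m.arcs.card :=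
  Finset.card_image_of_injOn (fun p hp q hq h => m.fst_inj hp hq h)

lemma maxima_card_eq (m : Matching n) : (arcMaxima m).card = m.arcs.card :=
  Finset.card_image_of_injOn (fun p hp q hq h => m.snd_inj hp hq h)

lemma minima_union_maxima (m : Matching n) :
    arcMinima m ∪ arcMaxima m = Finset.Icc 1 (2*n) := by
  apply Finset.Subset.antisymm
  · intro x hx
    rcases Finset.mem_union.1 hx with h | h
    · exact minima_subset m h
    · exact maxima_subset m h
  · intro x hx
    exact Finset.mem_union.2 (minima_or_maxima m hx)

lemma minima_disj_maxima (m : Matching n) : Disjoint (arcMinima m) (arcMaxima m) := by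
  rw [Finset.disjoint_left]
  intro x h1 h2
  exact not_minima_and_maxima m h1 h2

lemma arcs_card (m : Matching n) : m.arcs.card = n := by
  have h := Finset.card_union_of_disjoint (minima_disj_maxima m)
  rw [minima_union_maxima m, Nat.card_Icc, minima_card_eq, maxima_card_eq] at h
  omega

lemma minima_card (m : Matching n) : (arcMinima m).card = n := by
  rw [minima_card_eq, arcs_card]

lemma cnt_minima (m : Matching n) (v : ℕ) :
    CntLe (arcMinima m) v = (m.arcs.filter (fun p => p.1 ≤ v)).card := by
  unfold CntLe
  rw [show (arcMinima m).filter (· ≤ v) = (m.arcs.filter (fun p => p.1 ≤ v)).image Prod.fst by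
    ext x
    simp only [arcMinima, Finset.mem_filter, Finset.mem_image]
    constructor
    · rintro ⟨⟨p, hp, rfl⟩, hv⟩
      exact ⟨p, ⟨hp, hv⟩, rfl⟩
    · rintro ⟨p, ⟨hp, hv⟩, rfl⟩
      exact ⟨⟨p, hp, rfl⟩, hv⟩]
  exact Finset.card_image_of_injOn
    (fun p hp q hq h => m.fst_inj (Finset.mem_filter.1 hp).1 (Finset.mem_filter.1 hq).1 h)

lemma cnt_maxima (m : Matching n) (v : ℕ) :
    CntLe (arcMaxima m) v = (m.arcs.filter (fun p => p.2 ≤ v)).card := by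
  unfold CntLe
  rw [show (arcMaxima m).filter (· ≤ v) = (m.arcs.filter (fun p => p.2 ≤ v)).image Prod.snd by
    ext x
    simp only [arcMaxima, Finset.mem_filter, Finset.mem_image]
    constructor
    · rintro ⟨⟨p, hp, rfl⟩, hv⟩
      exact ⟨p, ⟨hp, hv⟩, rfl⟩
    · rintro ⟨p, ⟨hp, hv⟩, rfl⟩
      exact ⟨⟨p, hp, rfl⟩, hv⟩]
  exact Finset.card_image_of_injOn
    (fun p hp q hq h => m.snd_inj (Finset.mem_filter.1 hp).1 (Finset.mem_filter.1 hq).1 h)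

lemma cnt_maxima_le_minima (m : Matching n) (v : ℕ) :
    CntLe (arcMaxima m) v ≤ CntLe (arcMinima m) v := by
  rw [cnt_minima, cnt_maxima]
  apply Finset.card_le_card
  intro p hp
  simp only [Finset.mem_filter] at *
  exact ⟨hp.1, le_of_lt (lt_of_lt_of_le (m.arc_lt p hp.1) hp.2)⟩

lemma cnt_partition (m : Matching n) {v : ℕ} (hv : v ≤ 2*n) :
    CntLe (arcMinima m) v + CntLe (arcMaxima m) v = v := by
  unfold CntLe
  rw [← Finset.card_union_of_disjoint (Finset.disjoint_filter_filter (minima_disj_maxima m)),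
    ← Finset.filter_union, minima_union_maxima m]
  rw [show (Finset.Icc 1 (2*n)).filter (· ≤ v) = Finset.Icc 1 v by
    ext x
    simp only [Finset.mem_filter, Finset.mem_Icc]
    omega]
  rw [Nat.card_Icc]
  omega

lemma ballot (m : Matching n) {v : ℕ} (hv : v ≤ 2*n) :
    v ≤ 2 * CntLe (arcMinima m) v := by
  have h1 := cnt_partition m hv
  have h2 := cnt_maxima_le_minima m v
  omega

/-- A matching is aligned when the pairing of openers with closers is order-preserving. -/
def Aligned (m : Matching n) : Prop :=
  ∀ p ∈ m.arcs, ∀ q ∈ m.arcs, p.1 < q.1 → p.2 < q.2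

lemma Aligned.rev {m : Matching n} (hm : Aligned m) {p q : ℕ × ℕ}
    (hp : p ∈ m.arcs) (hq : q ∈ m.arcs) (h : p.2 < q.2) : p.1 < q.1 := by
  rcases Nat.lt_trichotomy p.1 q.1 with h' | h' | h'
  · exact h'
  · exact absurd (m.fst_inj hp hq h') (fun he => by rw [he] at h; exact lt_irrefl _ h)
  · exact absurd (hm q hq p hp h') (by omega)

lemma maxima_eq_sdiff (m : Matching n) :
    arcMaxima m = Finset.Icc 1 (2*n) \ arcMinima m := by
  apply Finset.Subset.antisymm
  · intro x hx
    exact Finset.mem_sdiff.2 ⟨maxima_subset m hx, fun h => not_minima_and_maxima m h hx⟩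
  · intro x hx
    obtain ⟨h1, h2⟩ := Finset.mem_sdiff.1 hx
    rcases minima_or_maxima m h1 with h | h
    · exact absurd h h2
    · exact h

lemma cntLe_inj {C : Finset ℕ} {x y : ℕ} (hx : x ∈ C) (hy : y ∈ C)
    (h : CntLe C x = CntLe C y) : x = y := by
  by_contra hne
  have key : ∀ u v : ℕ, u ∈ C → v ∈ C → u < v → CntLe C u < CntLe C v := by
    intro u v hu hv huv
    apply Finset.card_lt_card
    constructor
    · intro z hz
      simp only [Finset.mem_filter] at *
      exact ⟨hz.1, by omega⟩
    · intro hsub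
      have := hsub (Finset.mem_filter.2 ⟨hv, le_refl v⟩)
      simp only [Finset.mem_filter] at this
      omega
  rcases Nat.lt_or_ge x y with h' | h'
  · exact absurd h (Nat.ne_of_lt (key x y hx hy h'))
  · have : y < x := by omega
    exact absurd h.symm (Nat.ne_of_lt (key y x hy hx this))

lemma aligned_filter_eq {m : Matching n} (hm : Aligned m) {a b : ℕ} (hab : (a,b) ∈ m.arcs) :
    m.arcs.filter (fun p => p.2 ≤ b) = m.arcs.filter (fun p => p.1 ≤ a) := by
  ext p
  simp only [Finset.mem_filter]
  constructor
  · rintro ⟨hp, h2⟩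
    refine ⟨hp, ?_⟩
    rcases Nat.lt_or_ge p.2 b with h | h
    · exact le_of_lt (hm.rev hp hab h)
    · have : p.2 = b := by omega
      have := m.snd_inj hp hab this
      rw [this]
  · rintro ⟨hp, h1⟩
    refine ⟨hp, ?_⟩
    rcases Nat.lt_or_ge p.1 a with h | h
    · exact le_of_lt (hm p hp (a,b) hab h)
    · have : p.1 = a := by omega
      have := m.fst_inj hp hab this
      rw [this]

lemma aligned_unique {m m' : Matching n} (hm : Aligned m) (hm' : Aligned m')
    (hmin : arcMinima m = arcMinima m') : m = m' := by
  have hmax : arcMaxima m = arcMaxima m' := by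
    rw [maxima_eq_sdiff, maxima_eq_sdiff, hmin]
  have key : ∀ (M M' : Matching n), Aligned M → Aligned M' → arcMinima M = arcMinima M' →
      arcMaxima M = arcMaxima M' → ∀ p ∈ M.arcs, p ∈ M'.arcs := by
    intro M M' hM hM' hmin' hmax' p hp
    obtain ⟨a, b⟩ := p
    have ha : a ∈ arcMinima M' := hmin' ▸ mem_minima_iff.2 ⟨(a,b), hp, rfl⟩
    obtain ⟨q, hq, hq1⟩ := mem_minima_iff.1 ha
    obtain ⟨a', b'⟩ := q
    simp only at hq1
    rw [hq1] at hq
    clear hq1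
    -- show b = b'
    have h1 : CntLe (arcMaxima M) b = CntLe (arcMinima M) a := by
      rw [cnt_minima, cnt_maxima, aligned_filter_eq hM hp]
    have h2 : CntLe (arcMaxima M') b' = CntLe (arcMinima M') a := by
      rw [cnt_minima, cnt_maxima, aligned_filter_eq hM' hq]
    rw [← hmin', ← hmax'] at h2
    have hb : b ∈ arcMaxima M := mem_maxima_iff.2 ⟨_, hp, rfl⟩
    have hb' : b' ∈ arcMaxima M := hmax' ▸ mem_maxima_iff.2 ⟨_, hq, rfl⟩
    have : b = b' := cntLe_inj hb hb' (h1.trans h2.symm)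
    rw [this]
    exact hq
  apply Matching.ext'
  apply Finset.Subset.antisymm
  · exact fun p hp => key m m' hm hm' hmin hmax p hp
  · exact fun p hp => key m' m hm' hm hmin.symm hmax.symm p hp

end MatchCount
section AlignUp

open Finset

variable {n : ℕ}

lemma cnt_insert_erase_eq {O : Finset ℕ} {i : ℕ} (hi : i ∈ O) (hi1 : i + 1 ∉ O)
    {v : ℕ} (hv : v ≠ i) : CntLe (insert (i+1) (O.erase i)) v = CntLe O v := by
  unfold CntLe
  rcases Nat.lt_or_ge v i with h | h
  · congr 1
    ext a
    simp only [Finset.mem_filter, Finset.mem_insert, Finset.mem_erase]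
    constructor
    · rintro ⟨rfl | ⟨h1, h2⟩, h3⟩
      · omega
      · exact ⟨h2, h3⟩
    · rintro ⟨h1, h2⟩
      exact ⟨Or.inr ⟨by omega, h1⟩, h2⟩
  · have hvi : i + 1 ≤ v := by omega
    rw [show (insert (i+1) (O.erase i)).filter (· ≤ v)
        = insert (i+1) ((O.filter (· ≤ v)).erase i) by
      ext a
      simp only [Finset.mem_filter, Finset.mem_insert, Finset.mem_erase]
      constructor
      · rintro ⟨rfl | ⟨h1, h2⟩, h3⟩
        · exact Or.inl rfl
        · exact Or.inr ⟨h1, h2, h3⟩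
      · rintro (rfl | ⟨h1, h2, h3⟩)
        · exact ⟨Or.inl rfl, hvi⟩
        · exact ⟨Or.inr ⟨h1, h2⟩, h3⟩]
    rw [Finset.card_insert_of_notMem (by
      simp only [Finset.mem_erase, Finset.mem_filter]
      rintro ⟨-, h1, -⟩
      exact hi1 h1)]
    rw [Finset.card_erase_of_mem (Finset.mem_filter.2 ⟨hi, by omega⟩)]
    have : 0 < (O.filter (· ≤ v)).card := Finset.card_pos.2 ⟨i, Finset.mem_filter.2 ⟨hi, by omega⟩⟩
    omega

lemma cnt_insert_erase_at {O : Finset ℕ} {i : ℕ} (hi : i ∈ O) (hi1 : i + 1 ∉ O) :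
    CntLe (insert (i+1) (O.erase i)) i + 1 = CntLe O i := by
  unfold CntLe
  rw [show (insert (i+1) (O.erase i)).filter (· ≤ i) = (O.filter (· ≤ i)).erase i by
    ext a
    simp only [Finset.mem_filter, Finset.mem_insert, Finset.mem_erase]
    constructor
    · rintro ⟨rfl | ⟨h1, h2⟩, h3⟩
      · omega
      · exact ⟨h1, h2, h3⟩
    · rintro ⟨h1, h2, h3⟩
      exact ⟨Or.inr ⟨h1, h2⟩, h3⟩]
  have hmemi : i ∈ O.filter (· ≤ i) := Finset.mem_filter.2 ⟨hi, le_refl i⟩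
  have hc1 := Finset.card_erase_of_mem hmemi
  have hc2 : 0 < (O.filter (· ≤ i)).card := Finset.card_pos.2 ⟨i, hmemi⟩
  omega

lemma sum_insert_erase {O : Finset ℕ} {i : ℕ} (hi : i ∈ O) (hi1 : i + 1 ∉ O) :
    ∑ x ∈ insert (i+1) (O.erase i), x = (∑ x ∈ O, x) + 1 := by
  rw [Finset.sum_insert (by simp only [Finset.mem_erase]; rintro ⟨-, h⟩; exact hi1 h)]
  have h2 : i + ∑ x ∈ O.erase i, x = ∑ x ∈ O, x := Finset.add_sum_erase O id hi
  omega

/-- No arc of the form `(i, i+1)` at a strict domination point. -/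
lemma no_adjacent_arc {M M' : Matching n} (hM : Aligned M)
    (hii : (i, i+1) ∈ M.arcs)
    (hstr : CntLe (arcMinima M') i < CntLe (arcMinima M) i) : False := by
  have hIcc := M.arc_mem _ hii
  have hi2n : i + 1 ≤ 2 * n := (Finset.mem_Icc.1 hIcc.2).2
  -- arcs with fst ≤ i  =  arcs with snd ≤ i+1
  have hfeq : M.arcs.filter (fun p => p.1 ≤ i) = M.arcs.filter (fun p => p.2 ≤ i + 1) := by
    ext p
    simp only [Finset.mem_filter]
    constructor
    · rintro ⟨hp, h1⟩
      refine ⟨hp, ?_⟩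
      rcases Nat.lt_or_ge p.1 i with h | h
      · exact le_of_lt (hM p hp (i, i+1) hii h)
      · have : p.1 = i := by omega
        have := M.fst_inj hp hii this
        rw [this]
    · rintro ⟨hp, h2⟩
      refine ⟨hp, ?_⟩
      by_cases hpe : p = (i, i+1)
      · rw [hpe]
      · have hne1 : p.2 ≠ i + 1 := fun h => hpe (M.snd_inj hp hii h)
        have hne2 : p.2 ≠ i := fun h => M.fst_ne_snd hii hp h.symm
        have : p.2 < i := by omega
        exact le_of_lt (hM.rev hp hii (by omega))
  have h1 : CntLe (arcMinima M) i = CntLe (arcMaxima M) (i+1) := by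
    rw [cnt_minima, cnt_maxima, hfeq]
  have h2 : i + 1 ∉ arcMinima M :=
    fun h => not_minima_and_maxima M h (mem_maxima_iff.2 ⟨_, hii, rfl⟩)
  have h3 : CntLe (arcMinima M) (i+1) = CntLe (arcMinima M) i := by
    rw [cntLe_succ, if_neg h2]
    omega
  have h4 := cnt_partition M hi2n
  have h5 := ballot M' (le_trans (by omega : i ≤ i + 1) hi2n)
  omega

lemma alignup_step {M M' : Matching n} (hM : Aligned M) (hM' : Aligned M')
    (hdom : ∀ v, CntLe (arcMinima M') v ≤ CntLe (arcMinima M) v)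
    (hne : arcMinima M ≠ arcMinima M') :
    ∃ M₁ : Matching n, ResStep M M₁ ∧ Aligned M₁ ∧
      (∀ v, CntLe (arcMinima M') v ≤ CntLe (arcMinima M₁) v) ∧
      (∑ x ∈ arcMinima M₁, x) = (∑ x ∈ arcMinima M, x) + 1 := by
  obtain ⟨i, hiO, hi1O, hstr⟩ := select (minima_subset M) (minima_subset M')
    ((minima_card M).trans (minima_card M').symm) hdom hne
  obtain ⟨p, hp, hp1⟩ := mem_minima_iff.1 hiO
  obtain ⟨i', y⟩ := p
  simp only at hp1
  rw [hp1] at hp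
  clear hp1
  -- hp : (i, y) ∈ M.arcs
  have hiy : i < y := M.arc_lt _ hp
  have hy2n : y ≤ 2 * n := (Finset.mem_Icc.1 (M.arc_mem _ hp).2).2
  have hi1Icc : i + 1 ∈ Finset.Icc 1 (2*n) := Finset.mem_Icc.2 ⟨by omega, by omega⟩
  have hi1max : i + 1 ∈ arcMaxima M := by
    rcases minima_or_maxima M hi1Icc with h | h
    · exact absurd h hi1O
    · exact h
  obtain ⟨q, hq, hq2⟩ := mem_maxima_iff.1 hi1max
  obtain ⟨x, i''⟩ := q
  simp only at hq2
  rw [hq2] at hq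
  clear hq2
  -- hq : (x, i+1) ∈ M.arcs
  have hxi1 : x < i + 1 := M.arc_lt _ hq
  have hxi : x ≠ i := by
    intro h
    rw [h] at hq
    have heq := M.fst_inj hp hq rfl
    rw [heq] at hp
    exact no_adjacent_arc hM hp hstr
  have hxlt : x < i := by omega
  have hyne : y ≠ i + 1 := by
    intro h
    rw [← h] at hq
    have := M.snd_inj hp hq rfl
    simp at this
    omega
  have hylt : i + 1 < y := by omega
  obtain ⟨m₁, m₂, h₁, h₂, hs₁, hs₂⟩ := resSteps M hxlt (by omega) hylt hq hp
  have hmem : ∀ r : ℕ × ℕ, r ∈ m₁.arcs ↔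
      ((r ∈ M.arcs ∧ r ≠ (x, i+1) ∧ r ≠ (i, y)) ∨ r = (x, i) ∨ r = (i+1, y)) := by
    intro r
    rw [h₁]
    simp only [Finset.mem_union, Finset.mem_sdiff, Finset.mem_insert, Finset.mem_singleton]
    tauto
  have hminima : arcMinima m₁ = insert (i+1) ((arcMinima M).erase i) := by
    ext k
    simp only [Finset.mem_insert, Finset.mem_erase]
    constructor
    · intro hk
      obtain ⟨r, hr, hrk⟩ := mem_minima_iff.1 hk
      rcases (hmem r).1 hr with ⟨hrM, hne1, hne2⟩ | rfl | rfl
      · have hki : k ≠ i := by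
          intro h
          exact hne2 (M.fst_inj hrM hp (by rw [hrk, h]))
        exact Or.inr ⟨hki, mem_minima_iff.2 ⟨r, hrM, hrk⟩⟩
      · simp only at hrk
        refine Or.inr ⟨by omega, mem_minima_iff.2 ⟨(x, i+1), hq, by rw [← hrk]⟩⟩
      · simp only at hrk
        exact Or.inl hrk.symm
    · rintro (rfl | ⟨hki, hk⟩)
      · exact mem_minima_iff.2 ⟨(i+1, y), (hmem _).2 (Or.inr (Or.inr rfl)), rfl⟩
      · obtain ⟨r, hr, hrk⟩ := mem_minima_iff.1 hk
        by_cases hrq : r = (x, i+1)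
        · exact mem_minima_iff.2 ⟨(x, i), (hmem _).2 (Or.inr (Or.inl rfl)), by
            rw [hrq] at hrk; exact hrk⟩
        · have hrp : r ≠ (i, y) := by
            intro h
            rw [h] at hrk
            simp only at hrk
            exact hki hrk.symm
          exact mem_minima_iff.2 ⟨r, (hmem _).2 (Or.inl ⟨hr, hrq, hrp⟩), hrk⟩
  refine ⟨m₁, hs₁, ?_, ?_, ?_⟩
  · -- Aligned m₁
    intro r hr s hs hrs
    rcases (hmem r).1 hr with ⟨hrM, hr1, hr2⟩ | rfl | rfl <;>
      rcases (hmem s).1 hs with ⟨hsM, hs1, hs2⟩ | rfl | rfl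
    · exact hM r hrM s hsM hrs
    · -- s = (x, i)
      simp only at hrs ⊢
      have h1 : r.2 < i + 1 := hM r hrM (x, i+1) hq hrs
      have h2 : r.2 ≠ i := fun h => M.fst_ne_snd hp hrM h.symm
      omega
    · -- s = (i+1, y)
      simp only at hrs ⊢
      have hrne : r.1 ≠ i := fun h => hr2 (M.fst_inj hrM hp h)
      exact hM r hrM (i, y) hp (by omega)
    · -- r = (x, i)
      simp only at hrs ⊢
      have := hM (x, i+1) hq s hsM hrs
      simp only at this
      omega
    · simp only at hrs; omega
    · simp only at hrs ⊢; omega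
    · -- r = (i+1, y)
      simp only at hrs ⊢
      have := hM (i, y) hp s hsM (by omega)
      simp only at this
      omega
    · simp only at hrs ⊢; omega
    · simp only at hrs; omega
  · -- domination
    intro v
    rw [hminima]
    by_cases hv : v = i
    · subst hv
      have := cnt_insert_erase_at hiO hi1O
      omega
    · rw [cnt_insert_erase_eq hiO hi1O hv]
      exact hdom v
  · -- sum
    rw [hminima]
    exact sum_insert_erase hiO hi1O

lemma alignup : ∀ (d : ℕ) (M M' : Matching n), Aligned M → Aligned M' →
    (∀ v, CntLe (arcMinima M') v ≤ CntLe (arcMinima M) v) →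
    2 * n * (2 * n) ≤ (∑ x ∈ arcMinima M, x) + d → Reachable M M' := by
  intro d
  induction d with
  | zero =>
    intro M M' hM hM' hdom hsum
    by_cases hne : arcMinima M = arcMinima M'
    · rw [aligned_unique hM hM' hne]
      exact Relation.ReflTransGen.refl
    · exfalso
      obtain ⟨M₁, _, _, _, hsum₁⟩ := alignup_step hM hM' hdom hne
      have hbound : (∑ x ∈ arcMinima M₁, x) ≤ 2 * n * (2 * n) := by
        calc (∑ x ∈ arcMinima M₁, x) ≤ ∑ x ∈ Finset.Icc 1 (2*n), x :=
          Finset.sum_le_sum_of_subset (minima_subset M₁)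
        _ ≤ (Finset.Icc 1 (2*n)).card * (2*n) := by
            rw [← smul_eq_mul]
            apply Finset.sum_le_card_nsmul
            intro x hx
            exact (Finset.mem_Icc.1 hx).2
        _ = 2 * n * (2 * n) := by
            rw [Nat.card_Icc]
            have h : 2*n + 1 - 1 = 2*n := by omega
            rw [h]
      omega
  | succ d ih =>
    intro M M' hM hM' hdom hsum
    by_cases hne : arcMinima M = arcMinima M'
    · rw [aligned_unique hM hM' hne]
      exact Relation.ReflTransGen.refl
    · obtain ⟨M₁, hstep, hal, hdom₁, hsum₁⟩ := alignup_step hM hM' hdom hne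
      exact Relation.ReflTransGen.head hstep (ih M₁ M' hal hM' hdom₁ (by omega))

end AlignUp
section Uncross

open Finset

variable {n : ℕ}

/-- Weight used to show termination of type-2 resolutions. -/
def sumW (m : Matching n) : ℕ := ∑ p ∈ m.arcs, (2*n - p.1) * p.2

lemma sumW_bound (m : Matching n) : sumW m ≤ n * (2*n*(2*n)) := by
  unfold sumW
  calc ∑ p ∈ m.arcs, (2*n - p.1) * p.2 ≤ m.arcs.card • (2*n*(2*n)) := by
        apply Finset.sum_le_card_nsmul
        intro p hp
        have h1 : p.2 ≤ 2*n := (Finset.mem_Icc.1 (m.arc_mem p hp).2).2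
        have h2 : 2*n - p.1 ≤ 2*n := by omega
        exact Nat.mul_le_mul h2 h1
  _ = n * (2*n*(2*n)) := by rw [arcs_card, smul_eq_mul]

lemma uncross_step (M : Matching n) (hnc : ¬ Noncrossing M) :
    ∃ M₂ : Matching n, ResStep M M₂ ∧ arcMinima M₂ = arcMinima M ∧ sumW M + 1 ≤ sumW M₂ := by
  simp only [Noncrossing, not_forall] at hnc
  obtain ⟨p, hp, q, hq, hcr⟩ := hnc
  rw [not_not] at hcr  -- might not be needed
  obtain ⟨h1, h2, h3⟩ := hcr
  set a := p.1 with ha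
  set c := p.2 with hc
  set b := q.1 with hb
  set d := q.2 with hd
  have hac : (a, c) ∈ M.arcs := by rw [ha, hc, Prod.mk.eta]; exact hp
  have hbd : (b, d) ∈ M.arcs := by rw [hb, hd, Prod.mk.eta]; exact hq
  have hbc : b < c := h2
  have hcd : c < d := h3
  have hab : a < b := h1
  obtain ⟨m₁, m₂, hm₁, hm₂, hs₁, hs₂⟩ := resSteps M hab hbc hcd hac hbd
  set rest := M.arcs \ {(a,c),(b,d)} with hrest
  have hrmem : ∀ r : ℕ × ℕ, r ∈ rest ↔ (r ∈ M.arcs ∧ r ≠ (a,c) ∧ r ≠ (b,d)) := by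
    intro r
    simp only [hrest, Finset.mem_sdiff, Finset.mem_insert, Finset.mem_singleton]
    tauto
  have hacbd : (a,c) ≠ (b,d) := by
    intro h
    rw [Prod.mk.injEq] at h
    omega
  have hadM : (a,d) ∉ M.arcs := by
    intro h
    have := M.fst_inj h hac rfl
    rw [Prod.mk.injEq] at this
    omega
  have hbcM : (b,c) ∉ M.arcs := by
    intro h
    have := M.fst_inj h hbd rfl
    rw [Prod.mk.injEq] at this
    omega
  have hMeq : M.arcs = insert (a,c) (insert (b,d) rest) := by
    ext r
    simp only [Finset.mem_insert]
    rw [hrmem r]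
    constructor
    · intro hr
      by_cases e1 : r = (a,c)
      · exact Or.inl e1
      · by_cases e2 : r = (b,d)
        · exact Or.inr (Or.inl e2)
        · exact Or.inr (Or.inr ⟨hr, e1, e2⟩)
    · rintro (rfl | rfl | ⟨hr, -, -⟩)
      · exact hac
      · exact hbd
      · exact hr
  have hm₂eq : m₂.arcs = insert (a,d) (insert (b,c) rest) := by
    rw [hm₂]
    ext r
    simp only [Finset.mem_union, Finset.mem_insert, Finset.mem_singleton, ← hrest]
    tauto
  have hadrest : (a,d) ∉ insert (b,c) rest := by
    simp only [Finset.mem_insert]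
    rintro (h | h)
    · rw [Prod.mk.injEq] at h; omega
    · exact hadM ((hrmem _).1 h).1
  have hbcrest : (b,c) ∉ rest := fun h => hbcM ((hrmem _).1 h).1
  have hbdrest : (b,d) ∉ rest := fun h => ((hrmem _).1 h).2.2 rfl
  have hacrest : (a,c) ∉ insert (b,d) rest := by
    simp only [Finset.mem_insert]
    rintro (h | h)
    · exact hacbd h
    · exact ((hrmem _).1 h).2.1 rfl
  refine ⟨m₂, hs₂, ?_, ?_⟩
  · -- minima preserved
    ext k
    rw [arcMinima, arcMinima, hm₂eq, hMeq]
    simp only [Finset.image_insert, Finset.mem_insert]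
  · -- weight increases
    have e1 : sumW M = (2*n - a) * c + ((2*n - b) * d + ∑ r ∈ rest, (2*n - r.1) * r.2) := by
      unfold sumW
      rw [hMeq, Finset.sum_insert hacrest, Finset.sum_insert hbdrest]
    have e2 : sumW m₂ = (2*n - a) * d + ((2*n - b) * c + ∑ r ∈ rest, (2*n - r.1) * r.2) := by
      unfold sumW
      rw [hm₂eq, Finset.sum_insert hadrest, Finset.sum_insert hbcrest]
    have hd2n : d ≤ 2*n := (Finset.mem_Icc.1 (M.arc_mem _ hbd).2).2
    have hΑ : 2*n - b + 1 ≤ 2*n - a := by omega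
    have hC : c + 1 ≤ d := by omega
    set A := 2*n - a
    set B := 2*n - b
    have key : A * c + B * d + 1 ≤ A * d + B * c := by nlinarith
    omega

lemma uncross : ∀ (d : ℕ) (M : Matching n), n * (2*n*(2*n)) ≤ sumW M + d →
    ∃ w' : Matching n, Reachable M w' ∧ Noncrossing w' ∧ arcMinima w' = arcMinima M := by
  intro d
  induction d with
  | zero =>
    intro M hb
    by_cases hnc : Noncrossing M
    · exact ⟨M, Relation.ReflTransGen.refl, hnc, rfl⟩
    · exfalso
      obtain ⟨M₂, -, -, hsum⟩ := uncross_step M hnc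
      have := sumW_bound M₂
      omega
  | succ d ih =>
    intro M hb
    by_cases hnc : Noncrossing M
    · exact ⟨M, Relation.ReflTransGen.refl, hnc, rfl⟩
    · obtain ⟨M₂, hstep, hmin, hsum⟩ := uncross_step M hnc
      obtain ⟨w', hr, hnc', hmin'⟩ := ih M₂ (by omega)
      exact ⟨w', Relation.ReflTransGen.head hstep hr, hnc', hmin'.trans hmin⟩

end Uncross
section NCUnique

open Finset

/-- Ground set of an arc set. -/
def groundOf (A : Finset (ℕ × ℕ)) : Finset ℕ := A.image Prod.fst ∪ A.image Prod.snd

/-- The properties of a matching's arc set needed for the uniqueness argument. -/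
def GoodArcs (A : Finset (ℕ × ℕ)) : Prop :=
  (∀ p ∈ A, p.1 < p.2) ∧
  (∀ p ∈ A, ∀ q ∈ A, ∀ k : ℕ, (k = p.1 ∨ k = p.2) → (k = q.1 ∨ k = q.2) → p = q) ∧
  (∀ p ∈ A, ∀ q ∈ A, ¬ Crosses p q)

lemma good_snd_not_fst {A : Finset (ℕ × ℕ)} (hA : GoodArcs A) {p : ℕ × ℕ} (hp : p ∈ A) :
    p.2 ∉ A.image Prod.fst := by
  intro h
  obtain ⟨q, hq, hqk⟩ := Finset.mem_image.1 h
  have heq := hA.2.1 p hp q hq p.2 (Or.inr rfl) (Or.inl hqk.symm)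
  have hlt := hA.1 p hp
  rw [heq] at hqk hlt
  omega

lemma good_fst_not_snd {A : Finset (ℕ × ℕ)} (hA : GoodArcs A) {p : ℕ × ℕ} (hp : p ∈ A) :
    p.1 ∉ A.image Prod.snd := by
  intro h
  obtain ⟨q, hq, hqk⟩ := Finset.mem_image.1 h
  have heq := hA.2.1 p hp q hq p.1 (Or.inl rfl) (Or.inr hqk.symm)
  have hlt := hA.1 p hp
  rw [heq] at hqk hlt
  omega

lemma image_fst_erase {A : Finset (ℕ × ℕ)} (hA : GoodArcs A) {p : ℕ × ℕ} (hp : p ∈ A) :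
    (A.erase p).image Prod.fst = (A.image Prod.fst).erase p.1 := by
  ext k
  simp only [Finset.mem_image, Finset.mem_erase]
  constructor
  · rintro ⟨q, hq, rfl⟩
    obtain ⟨hqp, hqA⟩ := hq
    refine ⟨fun h => hqp (hA.2.1 q hqA p hp q.1 (Or.inl rfl) (Or.inl h)), q, hqA, rfl⟩
  · rintro ⟨hk, q, hq, rfl⟩
    exact ⟨q, ⟨fun h => hk (by rw [h]), hq⟩, rfl⟩

lemma image_snd_erase {A : Finset (ℕ × ℕ)} (hA : GoodArcs A) {p : ℕ × ℕ} (hp : p ∈ A) :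
    (A.erase p).image Prod.snd = (A.image Prod.snd).erase p.2 := by
  ext k
  simp only [Finset.mem_image, Finset.mem_erase]
  constructor
  · rintro ⟨q, hq, rfl⟩
    obtain ⟨hqp, hqA⟩ := hq
    refine ⟨fun h => hqp (hA.2.1 q hqA p hp q.2 (Or.inr rfl) (Or.inr h)), q, hqA, rfl⟩
  · rintro ⟨hk, q, hq, rfl⟩
    exact ⟨q, ⟨fun h => hk (by rw [h]), hq⟩, rfl⟩

lemma ground_erase {A : Finset (ℕ × ℕ)} (hA : GoodArcs A) {p : ℕ × ℕ} (hp : p ∈ A) :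
    groundOf (A.erase p) = ((groundOf A).erase p.1).erase p.2 := by
  unfold groundOf
  rw [image_fst_erase hA hp, image_snd_erase hA hp]
  ext k
  simp only [Finset.mem_union, Finset.mem_erase]
  have h1 := good_snd_not_fst hA hp
  have h2 := good_fst_not_snd hA hp
  constructor
  · rintro (⟨hk1, hk⟩ | ⟨hk2, hk⟩)
    · exact ⟨fun h => h1 (h ▸ hk), hk1, Or.inl hk⟩
    · refine ⟨hk2, fun h => h2 (h ▸ hk), Or.inr hk⟩
  · rintro ⟨hk2, hk1, hk | hk⟩
    · exact Or.inl ⟨hk1, hk⟩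
    · exact Or.inr ⟨hk2, hk⟩

lemma good_erase {A : Finset (ℕ × ℕ)} (hA : GoodArcs A) (p : ℕ × ℕ) :
    GoodArcs (A.erase p) := by
  obtain ⟨h1, h2, h3⟩ := hA
  refine ⟨fun q hq => h1 q (Finset.mem_of_mem_erase hq),
    fun q hq r hr => h2 q (Finset.mem_of_mem_erase hq) r (Finset.mem_of_mem_erase hr),
    fun q hq r hr => h3 q (Finset.mem_of_mem_erase hq) r (Finset.mem_of_mem_erase hr)⟩

lemma nc_partner_min {A : Finset (ℕ × ℕ)} (hA : GoodArcs A) {a b : ℕ} (hab : (a,b) ∈ A)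
    (hmax : ∀ k ∈ A.image Prod.fst, k ≤ a) :
    ∀ v ∈ groundOf A, a < v → b ≤ v := by
  intro v hv hav
  rcases Finset.mem_union.1 hv with h | h
  · exact absurd (hmax v h) (by omega)
  · obtain ⟨q, hq, hqv⟩ := Finset.mem_image.1 h
    by_cases hqab : q = (a, b)
    · rw [hqab] at hqv
      simp only at hqv
      omega
    · have he : q.1 ≠ a := by
        intro h'
        exact hqab (hA.2.1 q hq (a,b) hab q.1 (Or.inl rfl) (Or.inl h'))
      have hea : q.1 < a := lt_of_le_of_ne (hmax q.1 (Finset.mem_image.2 ⟨q, hq, rfl⟩)) he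
      have hnx := hA.2.2 q hq (a,b) hab
      unfold Crosses at hnx
      simp only at hnx
      omega

lemma nc_unique : ∀ (N : ℕ) (A B : Finset (ℕ × ℕ)), A.card ≤ N →
    GoodArcs A → GoodArcs B → groundOf A = groundOf B →
    A.image Prod.fst = B.image Prod.fst → A = B := by
  intro N
  induction N with
  | zero =>
    intro A B hcard hA hB hg hf
    have hA0 : A = ∅ := Finset.card_eq_zero.1 (by omega)
    subst hA0
    rcases Finset.eq_empty_or_nonempty B with h | ⟨p, hp⟩
    · exact h.symm
    · exfalso
      have : p.1 ∈ groundOf B :=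
        Finset.mem_union.2 (Or.inl (Finset.mem_image.2 ⟨p, hp, rfl⟩))
      rw [← hg] at this
      simp [groundOf] at this
  | succ N ih =>
    intro A B hcard hA hB hg hf
    rcases Finset.eq_empty_or_nonempty A with h | ⟨p, hp⟩
    · subst h
      rcases Finset.eq_empty_or_nonempty B with h | ⟨q, hq⟩
      · exact h.symm
      · exfalso
        have : q.1 ∈ groundOf B :=
          Finset.mem_union.2 (Or.inl (Finset.mem_image.2 ⟨q, hq, rfl⟩))
        rw [← hg] at this
        simp [groundOf] at this
    · have hfne : (A.image Prod.fst).Nonempty := ⟨p.1, Finset.mem_image.2 ⟨p, hp, rfl⟩⟩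
      obtain ⟨a, hamem, hmaxA⟩ : ∃ a, a ∈ A.image Prod.fst ∧ ∀ k ∈ A.image Prod.fst, k ≤ a :=
        ⟨(A.image Prod.fst).max' hfne, (A.image Prod.fst).max'_mem hfne,
          fun k hk => Finset.le_max' _ k hk⟩
      have hmaxB : ∀ k ∈ B.image Prod.fst, k ≤ a := by rw [← hf]; exact hmaxA
      obtain ⟨pa, hpa, hpa1⟩ := Finset.mem_image.1 hamem
      obtain ⟨a', b⟩ := pa
      simp only at hpa1
      rw [hpa1] at hpa
      clear hpa1
      have haB : a ∈ B.image Prod.fst := hf ▸ hamem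
      obtain ⟨qa, hqa, hqa1⟩ := Finset.mem_image.1 haB
      obtain ⟨a'', b'⟩ := qa
      simp only at hqa1
      rw [hqa1] at hqa
      clear hqa1
      -- b = b'
      have hbB : b' ∈ groundOf A := by
        rw [hg]
        exact Finset.mem_union.2 (Or.inr (Finset.mem_image.2 ⟨(a,b'), hqa, rfl⟩))
      have hbA : b ∈ groundOf B := by
        rw [← hg]
        exact Finset.mem_union.2 (Or.inr (Finset.mem_image.2 ⟨(a,b), hpa, rfl⟩))
      have hab : a < b := hA.1 _ hpa
      have hab' : a < b' := hB.1 _ hqa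
      have hle1 : b ≤ b' := nc_partner_min hA hpa hmaxA b' hbB hab'
      have hle2 : b' ≤ b := nc_partner_min hB hqa hmaxB b hbA hab
      have hbb : b = b' := by omega
      rw [← hbb] at hqa
      -- recurse
      have hrec : A.erase (a,b) = B.erase (a,b) := by
        apply ih
        · have h1 := Finset.card_erase_add_one hpa
          omega
        · exact good_erase hA _
        · exact good_erase hB _
        · simp only [ground_erase hA hpa, ground_erase hB hqa, hg]
        · rw [image_fst_erase hA hpa, image_fst_erase hB hqa, hf]
      calc A = insert (a,b) (A.erase (a,b)) := (Finset.insert_erase hpa).symm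
      _ = insert (a,b) (B.erase (a,b)) := by rw [hrec]
      _ = B := Finset.insert_erase hqa

variable {n : ℕ}

lemma matching_ground (m : Matching n) : groundOf m.arcs = Finset.Icc 1 (2*n) :=
  minima_union_maxima m

lemma matching_good (m : Matching n) (hnc : Noncrossing m) : GoodArcs m.arcs :=
  ⟨m.arc_lt, fun p hp q hq k h1 h2 => m.mem_unique hp hq h1 h2, hnc⟩

lemma nc_matching_unique {w w' : Matching n} (hw : Noncrossing w) (hw' : Noncrossing w')
    (hmin : arcMinima w = arcMinima w') : w = w' := by
  apply Matching.ext'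
  exact nc_unique w.arcs.card w.arcs w'.arcs (le_refl _) (matching_good w hw)
    (matching_good w' hw') ((matching_ground w).trans (matching_ground w').symm) hmin

end NCUnique
section ColM

open Finset

variable {n : ℕ}

/-- The column matching of a tableau, as a `Matching`. -/
def colM (S : SYT n) : Matching n where
  arcs := columnArcs S
  arc_lt := by
    intro p hp
    obtain ⟨j, -, rfl⟩ := Finset.mem_image.1 hp
    exact S.col_lt j
  arc_mem := by
    intro p hp
    obtain ⟨j, -, rfl⟩ := Finset.mem_image.1 hp
    exact ⟨S.mem_range 0 j, S.mem_range 1 j⟩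
  cover := by
    intro k hk
    obtain ⟨i, j, hij⟩ := S.surj k hk
    refine ⟨(S.entry 0 j, S.entry 1 j),
      ⟨Finset.mem_image.2 ⟨j, Finset.mem_univ j, rfl⟩, ?_⟩, ?_⟩
    · subst hij
      fin_cases i
      · exact Or.inl rfl
      · exact Or.inr rfl
    · rintro q ⟨hq, hkq⟩
      obtain ⟨j', -, rfl⟩ := Finset.mem_image.1 hq
      suffices h : j' = j by rw [h]
      subst hij
      simp only at hkq
      rcases hkq with h | h
      · have h2 : (fun p : Fin 2 × Fin n => S.entry p.1 p.2) (i, j)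
            = (fun p : Fin 2 × Fin n => S.entry p.1 p.2) (0, j') := h
        have := S.inj h2
        exact (Prod.ext_iff.1 this).2.symm
      · have h2 : (fun p : Fin 2 × Fin n => S.entry p.1 p.2) (i, j)
            = (fun p : Fin 2 × Fin n => S.entry p.1 p.2) (1, j') := h
        have := S.inj h2
        exact (Prod.ext_iff.1 this).2.symm

lemma colM_arcs (S : SYT n) : (colM S).arcs = columnArcs S := rfl

lemma colM_minima (S : SYT n) : arcMinima (colM S) = firstRow S := by
  unfold arcMinima firstRow
  rw [colM_arcs]
  unfold columnArcs
  rw [Finset.image_image]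
  rfl

lemma colM_aligned (S : SYT n) : Aligned (colM S) := by
  intro p hp q hq hlt
  rw [colM_arcs] at hp hq
  obtain ⟨j, -, rfl⟩ := Finset.mem_image.1 hp
  obtain ⟨j', -, rfl⟩ := Finset.mem_image.1 hq
  simp only at hlt ⊢
  exact S.row_mono 1 ((S.row_mono 0).lt_iff_lt.1 hlt)

lemma cntLe_firstRow (S : SYT n) (v : ℕ) :
    CntLe (firstRow S) v = (Finset.univ.filter (fun k : Fin n => S.entry 0 k ≤ v)).card := by
  unfold CntLe firstRow
  rw [show (Finset.univ.image (S.entry 0)).filter (· ≤ v)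
      = (Finset.univ.filter (fun k : Fin n => S.entry 0 k ≤ v)).image (S.entry 0) by
    ext x
    simp only [Finset.mem_filter, Finset.mem_image, Finset.mem_univ, true_and]
    constructor
    · rintro ⟨⟨k, rfl⟩, hv⟩
      exact ⟨k, hv, rfl⟩
    · rintro ⟨k, hv, rfl⟩
      exact ⟨⟨k, rfl⟩, hv⟩]
  exact Finset.card_image_of_injOn (fun x _ y _ h => (S.row_mono 0).injective h)

end ColM

/-- If every first-row entry of `S` is at least the corresponding first-row entry of
`T`, `m` is the column matching of `T`, and `w` is a noncrossing matching whose
arc-minima are the first-row entries of `S`, then `w` is reachable from `m`. -/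
theorem stmt2 (n : ℕ) (hn : 1 ≤ n) (S T : SYT n)
    (hrow : ∀ k : Fin n, T.entry 0 k ≤ S.entry 0 k)
    (m : Matching n) (hm : m.arcs = columnArcs T)
    (w : Matching n) (hw : Noncrossing w) (hmin : arcMinima w = firstRow S) :
    Reachable m w := by
  have hmeq : m = colM T := Matching.ext' (by rw [hm, colM_arcs])
  have hdom : ∀ v, CntLe (arcMinima (colM S)) v ≤ CntLe (arcMinima (colM T)) v := by
    intro v
    rw [colM_minima, colM_minima, cntLe_firstRow, cntLe_firstRow]
    apply Finset.card_le_card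
    intro k hk
    simp only [Finset.mem_filter, Finset.mem_univ, true_and] at *
    exact le_trans (hrow k) hk
  have h1 : Reachable (colM T) (colM S) :=
    alignup (2*n*(2*n)) (colM T) (colM S) (colM_aligned T) (colM_aligned S) hdom
      (Nat.le_add_left _ _)
  obtain ⟨w', h2, hnc', hmin'⟩ := uncross (n*(2*n*(2*n))) (colM S) (Nat.le_add_left _ _)
  have hw'w : w' = w := by
    apply nc_matching_unique hnc' hw
    rw [hmin', colM_minima, hmin]
  rw [hmeq]
  exact Relation.ReflTransGen.trans h1 (hw'w ▸ h2)
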